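/- Let (a_s) be a finitely supported sequence of integers indexed by s ≥ 0, let σ be an even integer, and suppose (-1)^{s+σ/2}(t_s - δ(σ,s)) ≤ 0 for all s ≥ 0, where t_s = Σ_{j≥1} j·a_{s+j} and δ(σ,s) = max(0, ⌈(|σ|-2s)/4⌉). Then (-1)^{s+σ/2} a_s ≥ 0 for all s ≥ 1; that is, the coefficient sign alternation follows from the torsion-coefficient inequalities. -/

import Mathlib

/-- `δ(σ,s) = max(0, ⌈(|σ| - 2|s|)/4⌉)`. -/
def delta (σ s : ℤ) : ℤ := max 0 ⌈((|σ| - 2 * |s| : ℤ) : ℚ) / 4⌉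

lemma ceil_div_four' (x : ℤ) : ⌈((x:ℚ))/4⌉ = (x+3)/4 := by
  rw [Int.ceil_eq_iff]
  constructor
  · rw [lt_div_iff₀ (by norm_num : (0:ℚ) < 4)]
    have : ((x+3)/4 : ℤ) * 4 ≤ x + 3 := by omega
    have := (show (((x+3)/4 :ℤ):ℚ) * 4 ≤ (x:ℚ) + 3 by exact_mod_cast this)
    linarith
  · rw [div_le_iff₀ (by norm_num : (0:ℚ) < 4)]
    have : x ≤ ((x+3)/4 : ℤ) * 4 := by omega
    exact_mod_cast this

lemma delta_eq' (σ : ℤ) (hσ : Even σ) (s : ℕ) :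
    delta σ (s:ℤ) = max 0 ((|σ/2| - s + 1) / 2) := by
  obtain ⟨c, rfl⟩ := hσ
  have h2 : |c + c| = 2 * |c| := by rw [← two_mul, abs_mul]; norm_num
  unfold delta
  rw [h2, Nat.abs_cast, ceil_div_four']
  have hc : (c+c)/2 = c := by omega
  rw [hc]
  omega

/-- The torsion-coefficient inequalities `(-1)^(s+σ/2)(t_s - δ(σ,s)) ≤ 0` for a finitely
supported integer sequence `(a_s)` imply the Crowell–Murasugi sign alternation
`(-1)^(s+σ/2) a_s ≥ 0` for all `s ≥ 1`. -/
theorem sign_alternation_of_torsion_inequalities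
    (a : ℕ → ℤ) (N : ℕ) (hsupp : ∀ s : ℕ, N ≤ s → a s = 0)
    (σ : ℤ) (hσ : Even σ)
    (t : ℕ → ℤ) (ht : ∀ s : ℕ, t s = ∑ j ∈ Finset.Icc 1 N, (j : ℤ) * a (s + j))
    (h : ∀ s : ℕ, (-1 : ℚ) ^ ((s : ℤ) + σ / 2) * ((t s : ℚ) - (delta σ (s : ℤ) : ℚ)) ≤ 0) :
    ∀ s : ℕ, 1 ≤ s → 0 ≤ (-1 : ℚ) ^ ((s : ℤ) + σ / 2) * (a s : ℚ) := by
  -- the telescoping formula for t s - t (s+1)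
  have tsum_eq : ∀ s : ℕ, t s - t (s+1) = ∑ j ∈ Finset.range N, a (s+1+j) := by
    have key : ∀ s : ℕ, t s = ∑ j ∈ Finset.range (N+1), ((j:ℤ)+1) * a (s+1+j) := by
      intro s
      rw [ht s, ← Finset.Ico_add_one_right_eq_Icc, Finset.sum_Ico_eq_sum_range, Nat.add_sub_cancel]
      conv_rhs => rw [Finset.sum_range_succ]
      rw [hsupp (s+1+N) (by omega), mul_zero, add_zero]
      apply Finset.sum_congr rfl
      intro j _
      push_cast
      rw [show s + (1 + j) = s + 1 + j by omega]
      ring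
    intro s
    have hts1 : t (s+1) = ∑ j ∈ Finset.range (N+1), (j:ℤ) * a (s+1+j) := by
      rw [key (s+1), Finset.sum_range_succ, hsupp (s+1+1+N) (by omega), mul_zero, add_zero]
      conv_rhs => rw [Finset.sum_range_succ']
      simp only [Nat.cast_zero, zero_mul, add_zero]
      apply Finset.sum_congr rfl
      intro j _
      push_cast
      rw [show s + 1 + (j + 1) = s + 1 + 1 + j by omega]
    rw [key s, hts1, ← Finset.sum_sub_distrib]
    have : ∀ j ∈ Finset.range (N+1), ((j:ℤ)+1) * a (s+1+j) - (j:ℤ) * a (s+1+j) = a (s+1+j) := by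
      intro j _; ring
    rw [Finset.sum_congr rfl this, Finset.sum_range_succ, hsupp (s+1+N) (by omega), add_zero]
  -- the second-difference formula for a
  have ha : ∀ n : ℕ, (a (n+1) : ℤ) = t n - 2 * t (n+1) + t (n+2) := by
    intro n
    have h1 := tsum_eq n
    have h2 := tsum_eq (n+1)
    rw [show n+1+1 = n+2 from rfl] at h2
    have h3 : ∑ j ∈ Finset.range N, a (n+1+j) = ∑ j ∈ Finset.range N, a (n+1+1+j) + a (n+1) := by
      have e1 : ∑ j ∈ Finset.range (N+1), a (n+1+j)
          = ∑ j ∈ Finset.range N, a (n+1+(j+1)) + a (n+1+0) := Finset.sum_range_succ' _ _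
      have e2 : ∑ j ∈ Finset.range (N+1), a (n+1+j)
          = ∑ j ∈ Finset.range N, a (n+1+j) + a (n+1+N) := Finset.sum_range_succ _ _
      rw [hsupp (n+1+N) (by omega), add_zero] at e2
      rw [← e2, e1, add_zero]
      congr 1
      apply Finset.sum_congr rfl
      intro j _
      rw [show n + 1 + (j+1) = n + 1 + 1 + j by omega]
    rw [show n+1+1 = n+2 from rfl] at h3
    rw [h3] at h1
    omega
  -- the main argument
  intro s hs
  obtain ⟨n, rfl⟩ : ∃ n, s = n + 1 := ⟨s - 1, by omega⟩
  set c := σ / 2 with hcdef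
  have hne : (-1 : ℚ) ≠ 0 := by norm_num
  have hε : ∀ k : ℕ, (-1:ℚ) ^ ((k:ℤ) + c) * (t k : ℚ) ≤ (-1:ℚ) ^ ((k:ℤ) + c) * (delta σ (k:ℤ) : ℚ) := by
    intro k
    have := h k
    nlinarith [this]
  -- the delta second-difference bound
  have hδ : 0 ≤ (-1:ℚ) ^ ((n:ℤ) + 1 + c) *
      ((delta σ (n:ℤ) : ℚ) - 2 * (delta σ ((n:ℤ)+1) : ℚ) + (delta σ ((n:ℤ)+2) : ℚ)) := by
    have d0 := delta_eq' σ hσ n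
    have d1 := delta_eq' σ hσ (n+1)
    have d2 := delta_eq' σ hσ (n+2)
    push_cast at d1 d2
    rw [d0, d1, d2]
    rw [← hcdef] at d0 d1 d2 ⊢
    set m := |c| with hm
    have habs : m = c ∨ m = -c := abs_choice c
    set D : ℤ := max 0 ((m - n + 1)/2) - 2 * max 0 ((m - ((n:ℤ)+1) + 1)/2) + max 0 ((m - ((n:ℤ)+2) + 1)/2) with hD
    have hcast : ((max 0 ((m - n + 1)/2) : ℤ) : ℚ) - 2 * ((max 0 ((m - ((n:ℤ)+1) + 1)/2) : ℤ) : ℚ)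
        + ((max 0 ((m - ((n:ℤ)+2) + 1)/2) : ℤ) : ℚ) = (D : ℚ) := by push_cast [hD]; ring
    rw [hcast]
    rcases Int.even_or_odd ((n:ℤ) + 1 + c) with he | ho
    · rw [he.neg_one_zpow, one_mul]
      have hpar : ((n:ℤ)+1+c) % 2 = 0 := Int.even_iff.mp he
      have hD0 : 0 ≤ D := by omega
      exact_mod_cast hD0
    · rw [Odd.neg_one_zpow ho]
      have hpar : ((n:ℤ)+1+c) % 2 = 1 := Int.odd_iff.mp ho
      have hD0 : D ≤ 0 := by omega
      have : (D:ℚ) ≤ 0 := by exact_mod_cast hD0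
      linarith
  -- assemble
  have A := hε n
  have B := hε (n+1)
  have C := hε (n+2)
  push_cast at A B C ⊢
  have haq : (a (n+1) : ℚ) = (t n : ℚ) - 2 * (t (n+1) : ℚ) + (t (n+2) : ℚ) := by
    exact_mod_cast congrArg (Int.cast : ℤ → ℚ) (ha n)
  set E := (-1:ℚ) ^ ((n:ℤ) + c) with hE
  have e1 : (-1:ℚ) ^ ((n:ℤ) + 1 + c) = -E := by
    rw [hE, show (n:ℤ) + 1 + c = ((n:ℤ) + c) + 1 by ring, zpow_add₀ hne, zpow_one]; ring
  have e2 : (-1:ℚ) ^ ((n:ℤ) + 2 + c) = E := by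
    rw [hE, show (n:ℤ) + 2 + c = ((n:ℤ) + c) + 2 by ring, zpow_add₀ hne]; norm_num
  rw [e1] at B hδ ⊢
  rw [e2] at C
  push_cast at haq
  rw [haq]
  nlinarith [A, B, C, hδ]
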